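/- arXiv:1309.5493 — 3 statements merged into one kernel-verified Lean document; each statement's English description precedes it below -/
import Mathlib

section
/- Let f : ℝ → ℝ be C⁴ near a simple root α with f'(α) ≠ 0, let x = α + e, and let y = x - f(x)/f'(x) be the Newton iterate. Then f'(y)/f'(x) = 1 - 2c₂e + (6c₂² - 3c₃)e² + O(e³) as e → 0, where c_k = f^{(k)}(α)/(k! f'(α)). -/
open Filter Asymptotics Set

lemma contDiffAt_deriv' {n : ℕ} {g : ℝ → ℝ} {a : ℝ} (h : ContDiffAt ℝ (n+1 : ℕ) g a) :
    ContDiffAt ℝ n (deriv g) a := by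
  obtain ⟨u, hu, hcd⟩ := h.contDiffOn le_rfl (by simp)
  obtain ⟨t, htu, hto, hat⟩ := mem_nhds_iff.mp hu
  refine ((hcd.mono htu).deriv_of_isOpen hto ?_).contDiffAt (hto.mem_nhds hat)
  push_cast; rfl

lemma taylor_isBigO : ∀ (n : ℕ) (g : ℝ → ℝ) (a : ℝ), ContDiffAt ℝ (n+1 : ℕ) g a →
    (fun x => g x - ∑ k ∈ Finset.range (n+1),
        iteratedDeriv k g a / (Nat.factorial k) * (x-a)^k)
      =O[nhds a] fun x => (x-a)^(n+1) := by
  intro n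
  induction n with
  | zero =>
    intro g a hg
    have h1 : HasDerivAt g (deriv g a) a :=
      (hg.differentiableAt (by norm_num)).hasDerivAt
    have h2 := h1.hasFDerivAt.isBigO_sub
    simp only [zero_add, Finset.range_one, Finset.sum_singleton, iteratedDeriv_zero, pow_zero,
      Nat.factorial_zero, Nat.cast_one, div_one, mul_one, pow_one]
    exact h2
  | succ n IH =>
    intro g a hg
    have hg' : ContDiffAt ℝ (n+1:ℕ) (deriv g) a := contDiffAt_deriv' (by exact_mod_cast hg)
    obtain ⟨C, hC0, hCb⟩ := (IH (deriv g) a hg').exists_pos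
    have hCb' := hCb.bound
    have hev : ∀ᶠ x in nhds a, DifferentiableAt ℝ g x :=
      (hg.eventually (by simp)).mono fun x hx => hx.differentiableAt (by simp)
    obtain ⟨δ, hδ0, hδ⟩ := Metric.eventually_nhds_iff_ball.mp (hCb'.and hev)
    set c : ℕ → ℝ := fun k => iteratedDeriv k g a / (Nat.factorial k) with hc
    set R : ℝ → ℝ := fun x => g x - ∑ k ∈ Finset.range (n+2), c k * (x-a)^k with hR
    set R' : ℝ → ℝ := fun t => deriv g t - ∑ k ∈ Finset.range (n+1),
        iteratedDeriv k (deriv g) a / (Nat.factorial k) * (t-a)^k with hR'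
    refine IsBigO.of_bound (C * 1) ?_
    filter_upwards [Metric.ball_mem_nhds a hδ0] with x hx
    have hsub : uIcc a x ⊆ Metric.ball a δ := by
      intro t ht
      rw [Set.mem_uIcc] at ht
      rw [Metric.mem_ball, Real.dist_eq] at hx ⊢
      rcases ht with ⟨h1, h2⟩ | ⟨h1, h2⟩ <;> rw [abs_lt] at hx ⊢ <;>
        constructor <;> linarith [hx.1, hx.2]
    have habs : ∀ t ∈ uIcc a x, |t - a| ≤ |x - a| := by
      intro t ht
      rw [Set.mem_uIcc] at ht
      rcases ht with ⟨h1, h2⟩ | ⟨h1, h2⟩ <;> rw [abs_le] <;>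
        constructor <;> [skip; skip; skip; skip] <;>
        cases' (abs_nonneg (x-a)).lt_or_eq with h h <;>
        nlinarith [le_abs_self (x-a), neg_abs_le (x-a)]
    have hderiv : ∀ t ∈ uIcc a x, HasDerivWithinAt R (R' t) (uIcc a x) t := by
      intro t ht
      have htb := hsub ht
      have hgd : HasDerivAt g (deriv g t) t := (hδ t htb).2.hasDerivAt
      have hpoly : HasDerivAt (fun y => ∑ k ∈ Finset.range (n+2), c k * (y-a)^k)
          (∑ k ∈ Finset.range (n+2), c k * (k * (t-a)^(k-1))) t := by
        refine HasDerivAt.fun_sum fun k _ => ?_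
        have h1 : HasDerivAt (fun y : ℝ => (y - a)^k) (k * (t-a)^(k-1) * 1) t :=
          (hasDerivAt_pow k (t-a)).comp t ((hasDerivAt_id t).sub_const a)
        simpa [mul_comm, mul_assoc, mul_left_comm] using h1.const_mul (c k)
      have hsum : ∑ k ∈ Finset.range (n+2), c k * (k * (t-a)^(k-1))
          = ∑ k ∈ Finset.range (n+1),
              iteratedDeriv k (deriv g) a / (Nat.factorial k) * (t-a)^k := by
        rw [Finset.sum_range_succ']
        simp only [Nat.cast_zero, zero_mul, mul_zero, add_zero]
        refine Finset.sum_congr rfl fun k _ => ?_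
        rw [← iteratedDeriv_succ', Nat.add_sub_cancel]
        simp only [hc]
        have hk : (Nat.factorial (k+1) : ℝ) = (k+1) * Nat.factorial k := by
          push_cast [Nat.factorial_succ]; ring
        rw [hk]
        push_cast
        have h1 : (k:ℝ) + 1 ≠ 0 := by positivity
        have h2 : (Nat.factorial k : ℝ) ≠ 0 := by positivity
        field_simp
      rw [hsum] at hpoly
      exact (hgd.sub hpoly).hasDerivWithinAt
    have hbound : ∀ t ∈ uIcc a x, ‖R' t‖ ≤ C * |x - a|^(n+1) := by
      intro t ht
      have := (hδ t (hsub ht)).1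
      calc ‖R' t‖ ≤ C * ‖(t-a)^(n+1)‖ := this
        _ ≤ C * |x - a|^(n+1) := by
            rw [Real.norm_eq_abs, abs_pow]
            exact mul_le_mul_of_nonneg_left (pow_le_pow_left₀ (abs_nonneg _) (habs t ht) _) hC0.le
    have hmv := (convex_uIcc a x).norm_image_sub_le_of_norm_hasDerivWithin_le hderiv hbound
      (left_mem_uIcc) (right_mem_uIcc)
    have hRa : R a = 0 := by
      rw [hR]
      simp only [sub_eq_zero]
      rw [Finset.sum_eq_single_of_mem 0 (Finset.mem_range.mpr (Nat.succ_pos _))]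
      · simp [hc]
      · intro k _ hk
        simp [sub_self, zero_pow hk]
    rw [hRa, sub_zero] at hmv
    calc ‖g x - ∑ k ∈ Finset.range (n+1+1),
          iteratedDeriv k g a / (Nat.factorial k) * (x-a)^k‖ = ‖R x‖ := rfl
      _ ≤ C * |x-a|^(n+1) * ‖x - a‖ := hmv
      _ = C * 1 * ‖(x-a)^(n+1+1)‖ := by
          rw [Real.norm_eq_abs, Real.norm_eq_abs, abs_pow]
          ring

/-- `f'(y)/f'(x) = 1 - 2c₂e + (6c₂² - 3c₃)e² + O(e³)` for the Newton iterate `y`. -/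
theorem deriv_ratio_expansion (f : ℝ → ℝ) (α : ℝ)
    (hf : ContDiffAt ℝ 4 f α) (hroot : f α = 0) (hd : deriv f α ≠ 0) :
    (fun e : ℝ =>
        deriv f ((α + e) - f (α + e) / deriv f (α + e)) / deriv f (α + e)
          - (1 - 2 * (iteratedDeriv 2 f α / ((Nat.factorial 2 : ℝ) * deriv f α)) * e
              + (6 * (iteratedDeriv 2 f α / ((Nat.factorial 2 : ℝ) * deriv f α)) ^ 2
                  - 3 * (iteratedDeriv 3 f α / ((Nat.factorial 3 : ℝ) * deriv f α))) * e ^ 2))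
      =O[nhds 0] fun e : ℝ => e ^ 3 := by
  set A := deriv f α with hA_def
  set c2 : ℝ := iteratedDeriv 2 f α / ((Nat.factorial 2 : ℝ) * deriv f α) with hc2_def
  set c3 : ℝ := iteratedDeriv 3 f α / ((Nat.factorial 3 : ℝ) * deriv f α) with hc3_def
  have hb2 : iteratedDeriv 2 f α = 2 * A * c2 := by
    rw [hc2_def]; norm_num [Nat.factorial]; rw [← hA_def]; field_simp
  have hb3 : iteratedDeriv 3 f α = 6 * A * c3 := by
    rw [hc3_def]; norm_num [Nat.factorial]; rw [← hA_def]; field_simp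
  -- smoothness transfers
  have hf3 : ContDiffAt ℝ ((2:ℕ)+1 : ℕ) f α := hf.of_le (by norm_cast)
  have hf'3 : ContDiffAt ℝ ((2:ℕ)+1 : ℕ) (deriv f) α := by
    refine contDiffAt_deriv' (n := 3) ?_
    exact hf.of_le (by norm_cast)
  have hf'2 : ContDiffAt ℝ ((1:ℕ)+1 : ℕ) (deriv f) α := hf'3.of_le (by norm_cast)
  have T0 := taylor_isBigO 2 f α hf3
  have T1 := taylor_isBigO 2 (deriv f) α hf'3
  have T2 := taylor_isBigO 1 (deriv f) α hf'2
  -- expand sums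
  have hT0 : (fun x => f x - (A*(x-α) + A*c2*(x-α)^2)) =O[nhds α] fun x => (x-α)^3 := by
    refine T0.congr_left fun x => ?_
    simp only [Finset.sum_range_succ, Finset.sum_range_zero, iteratedDeriv_zero,
      iteratedDeriv_one, hroot, hb2, Nat.factorial]
    push_cast; ring
  have hid1 : iteratedDeriv 1 (deriv f) α = iteratedDeriv 2 f α := by
    rw [← iteratedDeriv_succ']
  have hid2 : iteratedDeriv 2 (deriv f) α = iteratedDeriv 3 f α := by
    rw [← iteratedDeriv_succ']
  have hT1 : (fun x => deriv f x - (A + 2*A*c2*(x-α) + 3*A*c3*(x-α)^2))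
      =O[nhds α] fun x => (x-α)^3 := by
    refine T1.congr_left fun x => ?_
    simp only [Finset.sum_range_succ, Finset.sum_range_zero, iteratedDeriv_zero,
      hid1, hid2, hb2, hb3, Nat.factorial, ← hA_def]
    push_cast; ring
  have hT2 : (fun z => deriv f z - (A + 2*A*c2*(z-α))) =O[nhds α] fun z => (z-α)^2 := by
    refine T2.congr_left fun z => ?_
    simp only [Finset.sum_range_succ, Finset.sum_range_zero, iteratedDeriv_zero,
      hid1, hb2, Nat.factorial, ← hA_def]
    push_cast; ring
  -- move to e-land
  have hcomp : Tendsto (fun e : ℝ => α + e) (nhds 0) (nhds α) := by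
    simpa using (continuous_add_left α).tendsto (0:ℝ)
  have hE0 : (fun e : ℝ => f (α+e) - (A*e + A*c2*e^2)) =O[nhds 0] fun e => e^3 := by
    refine ((hT0.comp_tendsto hcomp).congr (fun e => ?_) (fun e => ?_)) <;> simp
  have hE1 : (fun e : ℝ => deriv f (α+e) - (A + 2*A*c2*e + 3*A*c3*e^2))
      =O[nhds 0] fun e => e^3 := by
    refine ((hT1.comp_tendsto hcomp).congr (fun e => ?_) (fun e => ?_)) <;> simp
  -- lower bound on deriv f (α+e)
  have hφcont : ContinuousAt (deriv f) α := hf'2.continuousAt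
  have hφtend : Tendsto (fun e : ℝ => |deriv f (α+e)|) (nhds 0) (nhds |A|) :=
    (continuous_abs.continuousAt.tendsto.comp (hφcont.tendsto.comp hcomp))
  have hφ : ∀ᶠ e : ℝ in nhds 0, |A|/2 ≤ |deriv f (α+e)| :=
    hφtend.eventually_const_le (by simp [abs_pos.mpr hd])
  have hApos : (0:ℝ) < |A| := abs_pos.mpr hd
  have hφne : ∀ᶠ e : ℝ in nhds 0, deriv f (α+e) ≠ 0 := by
    filter_upwards [hφ] with e he
    intro h; rw [h] at he; simp at he; nlinarith
  have hinv : (fun e : ℝ => (deriv f (α+e))⁻¹) =O[nhds 0] fun _ => (1:ℝ) := by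
    refine IsBigO.of_bound (2/|A|) ?_
    filter_upwards [hφ] with e he
    have h0 : (0:ℝ) < |deriv f (α+e)| := by nlinarith
    rw [norm_inv, norm_one, mul_one, Real.norm_eq_abs]
    rw [inv_le_comm₀ h0 (by positivity)]
    calc (2/|A|)⁻¹ = |A|/2 := by field_simp
      _ ≤ |deriv f (α+e)| := he
  have he43 : (fun e : ℝ => e^4) =O[nhds 0] fun e => e^3 := by
    refine IsBigO.of_bound 1 ?_
    filter_upwards [Metric.ball_mem_nhds (0:ℝ) one_pos] with e he
    rw [Metric.mem_ball, dist_zero_right, Real.norm_eq_abs] at he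
    rw [Real.norm_eq_abs, Real.norm_eq_abs, abs_pow, abs_pow, one_mul]
    exact pow_le_pow_of_le_one (abs_nonneg _) he.le (by norm_num)
  have he32 : (fun e : ℝ => e^3) =O[nhds 0] fun e => e^2 := by
    refine IsBigO.of_bound 1 ?_
    filter_upwards [Metric.ball_mem_nhds (0:ℝ) one_pos] with e he
    rw [Metric.mem_ball, dist_zero_right, Real.norm_eq_abs] at he
    rw [Real.norm_eq_abs, Real.norm_eq_abs, abs_pow, abs_pow, one_mul]
    exact pow_le_pow_of_le_one (abs_nonneg _) he.le (by norm_num)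
  -- the numerator expansion
  have hb1 : (fun e : ℝ => e - c2*e^2) =O[nhds 0] fun _ => (1:ℝ) := by
    refine Filter.Tendsto.isBigO_one ℝ (c := (0:ℝ)) ?_
    have : Continuous (fun e : ℝ => e - c2*e^2) :=
      continuous_id.sub (continuous_const.mul (continuous_pow 2))
    simpa using this.tendsto 0
  have h1 : (fun e : ℝ => (e - c2*e^2) *
      (deriv f (α+e) - (A + 2*A*c2*e + 3*A*c3*e^2))) =O[nhds 0] fun e => e^3 := by
    simpa using hb1.mul hE1
  have hfun : ∀ e:ℝ, (e - c2*e^2) * deriv f (α+e) - f (α+e)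
      = (e - c2*e^2) * (deriv f (α+e) - (A + 2*A*c2*e + 3*A*c3*e^2))
        - (f (α+e) - (A*e + A*c2*e^2))
        + ((3*A*c3 - 2*A*c2^2)*e^3 - 3*A*c2*c3*e^4) := by intro e; ring
  have hpoly : (fun e:ℝ => (3*A*c3 - 2*A*c2^2)*e^3 - 3*A*c2*c3*e^4)
      =O[nhds 0] fun e => e^3 :=
    ((isBigO_refl (fun e:ℝ => e^3) _).const_mul_left _).sub (he43.const_mul_left _)
  have hnum : (fun e : ℝ => (e - c2*e^2) * deriv f (α+e) - f (α+e))
      =O[nhds 0] fun e => e^3 := by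
    simp only [hfun]
    exact (h1.sub hE0).add hpoly
  set w : ℝ → ℝ := fun e => e - f (α+e) / deriv f (α+e) with hw_def
  have hwEq : (fun e => w e - c2*e^2) =ᶠ[nhds 0]
      fun e => ((e - c2*e^2) * deriv f (α+e) - f (α+e)) * (deriv f (α+e))⁻¹ := by
    filter_upwards [hφne] with e hne
    rw [hw_def]
    field_simp
    ring
  have hw3 : (fun e => w e - c2*e^2) =O[nhds 0] fun e => e^3 :=
    hwEq.trans_isBigO (by simpa using hnum.mul hinv)
  have hw2 : (fun e => w e) =O[nhds 0] fun e => e^2 := by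
    have h := (hw3.trans he32).add
      ((isBigO_refl (fun e:ℝ => e^2) (nhds 0)).const_mul_left c2)
    simpa using h
  have hwt : Tendsto w (nhds 0) (nhds 0) := by
    have h2t : Tendsto (fun e:ℝ => e^2) (nhds (0:ℝ)) (nhds 0) := by
      simpa using ((continuous_pow 2).tendsto (0:ℝ))
    exact hw2.trans_tendsto h2t
  have hyt : Tendsto (fun e => α + w e) (nhds 0) (nhds α) := by
    simpa using tendsto_const_nhds.add hwt
  obtain ⟨C2, hC2pos, hC2⟩ := hT2.exists_pos
  have hquad : ∀ᶠ e in nhds 0,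
      ‖deriv f (α + w e) - (A + 2*A*c2*(w e))‖ ≤ C2 * ‖(w e)^2‖ := by
    filter_upwards [hyt.eventually hC2.bound] with e he
    simpa using he
  have hwsq : (fun e => (w e)^2) =O[nhds 0] fun e => e^3 := by
    have h := hw2.mul hw2
    have h2 : (fun e => (w e)^2) =O[nhds 0] fun e => e^4 := by
      have e1 : (fun e => w e * w e) = fun e => (w e)^2 := by funext e; ring
      have e2 : (fun e:ℝ => e^2*e^2) = fun e:ℝ => e^4 := by funext e; ring
      rwa [e1, e2] at h
    exact h2.trans he43
  have hφy : (fun e => deriv f (α + w e) - (A + 2*A*c2*(w e)))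
      =O[nhds 0] fun e => e^3 :=
    (IsBigO.of_bound C2 hquad).trans hwsq
  have hP1 : (fun e:ℝ => 1 - 2*c2*e + (6*c2^2 - 3*c3)*e^2) =O[nhds 0] fun _ => (1:ℝ) := by
    refine Filter.Tendsto.isBigO_one ℝ (c := (1:ℝ)) ?_
    have hc : Continuous (fun e:ℝ => 1 - 2*c2*e + (6*c2^2 - 3*c3)*e^2) :=
      (continuous_const.sub (continuous_const.mul continuous_id)).add
        (continuous_const.mul (continuous_pow 2))
    simpa using hc.tendsto 0
  have hT3b : (fun e => (1 - 2*c2*e + (6*c2^2 - 3*c3)*e^2) *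
      (deriv f (α+e) - (A + 2*A*c2*e + 3*A*c3*e^2))) =O[nhds 0] fun e => e^3 := by
    simpa using hP1.mul hE1
  have hpoly3 : (fun e:ℝ => (12*A*c2*c3 - 12*A*c2^3)*e^3 + (9*A*c3^2 - 18*A*c2^2*c3)*e^4)
      =O[nhds 0] fun e => e^3 :=
    ((isBigO_refl (fun e:ℝ => e^3) _).const_mul_left _).add (he43.const_mul_left _)
  have hfun2 : ∀ e:ℝ, deriv f (α + w e)
        - (1 - 2*c2*e + (6*c2^2 - 3*c3)*e^2) * deriv f (α+e)
      = (deriv f (α + w e) - (A + 2*A*c2*(w e))) + 2*A*c2*(w e - c2*e^2)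
        - (1 - 2*c2*e + (6*c2^2-3*c3)*e^2) *
            (deriv f (α+e) - (A + 2*A*c2*e + 3*A*c3*e^2))
        + ((12*A*c2*c3 - 12*A*c2^3)*e^3 + (9*A*c3^2 - 18*A*c2^2*c3)*e^4) := by
    intro e; ring
  have hD : (fun e => deriv f (α + w e)
      - (1 - 2*c2*e + (6*c2^2 - 3*c3)*e^2) * deriv f (α+e)) =O[nhds 0] fun e => e^3 := by
    simp only [hfun2]
    exact ((hφy.add (hw3.const_mul_left (2*A*c2))).sub hT3b).add hpoly3
  have hgoalEq : (fun e : ℝ =>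
        deriv f ((α + e) - f (α + e) / deriv f (α + e)) / deriv f (α + e)
          - (1 - 2*c2*e + (6*c2^2 - 3*c3)*e^2))
      =ᶠ[nhds 0] fun e => (deriv f (α + w e)
          - (1 - 2*c2*e + (6*c2^2-3*c3)*e^2) * deriv f (α+e)) * (deriv f (α+e))⁻¹ := by
    filter_upwards [hφne] with e hne
    have harg : (α + e) - f (α + e) / deriv f (α + e) = α + w e := by
      rw [hw_def]; ring
    rw [harg]
    field_simp
  exact hgoalEq.trans_isBigO (by simpa using hD.mul hinv)
end

section
/- Let f : ℝ → ℝ be C⁵ near a simple root α with f'(α) ≠ 0. Define the iteration: y = x - (2/3)·f(x)/f'(x), t = f'(y)/f'(x), and x_new = x - (1/2)(3 - t)·(9/4 - (9/4)t + t²)·f(x)/f'(x). Then for x = α + e with e small, x_new - α = O(e⁴); i.e., this weighted method has fourth-order convergence. -/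
open Filter Asymptotics Set

lemma contDiffAt_deriv_succ {n : ℕ} {h : ℝ → ℝ} {x : ℝ}
    (hh : ContDiffAt ℝ (n + 1) h x) : ContDiffAt ℝ n (deriv h) x := by
  obtain ⟨u, hu, hcd⟩ := hh.contDiffOn (le_refl _) (by simp)
  obtain ⟨s, hsu, hso, hxs⟩ := mem_nhds_iff.mp hu
  have : ContDiffOn ℝ n (deriv h) s :=
    (hcd.mono hsu).deriv_of_isOpen hso (by exact_mod_cast le_refl _)
  exact this.contDiffAt (hso.mem_nhds hxs)

lemma taylor_peano : ∀ (n : ℕ) (h : ℝ → ℝ), ContDiffAt ℝ n h 0 →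
    (fun e : ℝ => h e - ∑ k ∈ Finset.range n, iteratedDeriv k h 0 / (k.factorial : ℝ) * e ^ k)
      =O[nhds (0:ℝ)] fun e => e ^ n := by
  intro n
  induction n with
  | zero =>
    intro h hh
    simpa using hh.continuousAt.tendsto.isBigO_one ℝ
  | succ n ih =>
    intro h hh
    have hd : ContDiffAt ℝ n (deriv h) 0 := contDiffAt_deriv_succ (by exact_mod_cast hh)
    have IH := ih (deriv h) hd
    -- rewrite the IH coefficients
    have hco : ∀ k : ℕ, iteratedDeriv k (deriv h) 0 = iteratedDeriv (k + 1) h 0 := by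
      intro k; rw [iteratedDeriv_succ']
    obtain ⟨C, hCpos, hC⟩ := IH.exists_pos
    rw [IsBigOWith] at hC
    -- differentiability neighborhood
    obtain ⟨u, hu, hcd⟩ := hh.contDiffOn (m := 1) (by exact_mod_cast Nat.one_le_iff_ne_zero.mpr (Nat.succ_ne_zero n)) (by simp)
    obtain ⟨s, hsu, hso, hxs⟩ := mem_nhds_iff.mp hu
    have hdiff : ∀ x ∈ s, HasDerivAt h (deriv h x) x := by
      intro x hx
      have : DifferentiableAt ℝ h x :=
        (((hcd.mono hsu).differentiableOn (by norm_num)).differentiableAt (hso.mem_nhds hx))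
      exact this.hasDerivAt
    obtain ⟨δ, hδpos, hδ⟩ := Metric.mem_nhds_iff.mp (Filter.inter_mem (hso.mem_nhds hxs) hC)
    rw [isBigO_iff]
    refine ⟨C, ?_⟩
    filter_upwards [Metric.ball_mem_nhds (0:ℝ) hδpos] with e he
    -- the remainder function
    set r : ℝ → ℝ := fun x => h x - ∑ k ∈ Finset.range (n+1), iteratedDeriv k h 0 / (k.factorial : ℝ) * x ^ k with hr
    have hr0 : r 0 = 0 := by
      simp [hr, Finset.sum_range_succ']
    have hsub : uIcc (0:ℝ) e ⊆ Metric.ball (0:ℝ) δ := by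
      intro x hx
      have h1 : |x| ≤ |e| := by
        rcases le_total 0 e with h' | h'
        · rw [uIcc_of_le h'] at hx
          rw [abs_of_nonneg hx.1, abs_of_nonneg h']; exact hx.2
        · rw [uIcc_of_ge h'] at hx
          rw [abs_of_nonpos (le_trans hx.2 (le_refl 0)), abs_of_nonpos h']
          linarith [hx.1]
      have : |e| < δ := by simpa [Real.dist_eq] using he
      simp only [Metric.mem_ball, Real.dist_eq, sub_zero]
      linarith
    -- derivative of r
    have hder : ∀ x ∈ uIcc (0:ℝ) e, HasDerivWithinAt r
        (deriv h x - ∑ k ∈ Finset.range n, iteratedDeriv (k+1) h 0 / (k.factorial : ℝ) * x ^ k)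
        (uIcc (0:ℝ) e) x := by
      intro x hx
      have hxs' : x ∈ s := (hδ (hsub hx)).1
      have h1 : HasDerivAt (fun y : ℝ => ∑ k ∈ Finset.range (n+1),
          iteratedDeriv k h 0 / (k.factorial : ℝ) * y ^ k)
          (∑ k ∈ Finset.range (n+1),
            iteratedDeriv k h 0 / (k.factorial : ℝ) * (k * x ^ (k - 1))) x := by
        apply HasDerivAt.fun_sum
        intro k _
        exact (hasDerivAt_pow k x).const_mul _
      have hsum : (∑ k ∈ Finset.range (n+1),
            iteratedDeriv k h 0 / (k.factorial : ℝ) * (k * x ^ (k - 1)))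
          = ∑ k ∈ Finset.range n, iteratedDeriv (k+1) h 0 / (k.factorial : ℝ) * x ^ k := by
        rw [Finset.sum_range_succ']
        simp only [Nat.cast_zero, zero_mul, mul_zero, add_zero]
        apply Finset.sum_congr rfl
        intro k _
        have hfac : ((k+1).factorial : ℝ) = (k+1) * (k.factorial : ℝ) := by
          push_cast [Nat.factorial_succ]; ring
        have hkf : (k.factorial : ℝ) ≠ 0 := Nat.cast_ne_zero.mpr k.factorial_ne_zero
        rw [hfac, Nat.add_sub_cancel]; push_cast
        rw [div_mul_eq_mul_div, div_mul_eq_mul_div, div_eq_div_iff (mul_ne_zero (by positivity) hkf) hkf]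
        ring
      rw [← hsum]
      exact ((hdiff x hxs').sub h1).hasDerivWithinAt
    have hbound : ∀ x ∈ uIcc (0:ℝ) e,
        ‖deriv h x - ∑ k ∈ Finset.range n, iteratedDeriv (k+1) h 0 / (k.factorial : ℝ) * x ^ k‖
          ≤ C * |e| ^ n := by
      intro x hx
      have h2 := (hδ (hsub hx)).2
      simp only [Set.mem_setOf_eq] at h2
      have h3 : ‖deriv h x - ∑ k ∈ Finset.range n, iteratedDeriv k (deriv h) 0 / (k.factorial : ℝ) * x ^ k‖ ≤ C * ‖x ^ n‖ := h2
      simp only [hco] at h3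
      refine h3.trans ?_
      have h1 : |x| ≤ |e| := by
        rcases le_total 0 e with h' | h'
        · rw [uIcc_of_le h'] at hx
          rw [abs_of_nonneg hx.1, abs_of_nonneg h']; exact hx.2
        · rw [uIcc_of_ge h'] at hx
          rw [abs_of_nonpos (le_trans hx.2 (le_refl 0)), abs_of_nonpos h']
          linarith [hx.1]
      have : ‖x ^ n‖ = |x| ^ n := by rw [Real.norm_eq_abs, abs_pow]
      rw [this]
      exact mul_le_mul_of_nonneg_left (pow_le_pow_left₀ (abs_nonneg x) h1 n) hCpos.le
    have key := Convex.norm_image_sub_le_of_norm_hasDerivWithin_le hder hbound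
      (convex_uIcc (0:ℝ) e) (left_mem_uIcc) (right_mem_uIcc)
    rw [hr0, sub_zero] at key
    calc ‖r e‖ ≤ C * |e| ^ n * ‖e - 0‖ := key
      _ = C * ‖e ^ (n+1)‖ := by
          rw [sub_zero, Real.norm_eq_abs, Real.norm_eq_abs, abs_pow, pow_succ]; ring

set_option maxHeartbeats 2000000 in
/-- The weighted fourth-order method (scalar case, β = 2/3, a₁ = 9/4, a₂ = -9/4, a₃ = 1):
`x_new - α = O(e⁴)`. -/
theorem weighted_fourth_order_scalar (f : ℝ → ℝ) (α : ℝ)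
    (hf : ContDiffAt ℝ 5 f α) (hroot : f α = 0) (hd : deriv f α ≠ 0) :
    (fun e : ℝ =>
        (α + e
            - (1 / 2)
              * (3 - deriv f ((α + e) - (2 / 3) * (f (α + e) / deriv f (α + e))) / deriv f (α + e))
              * (9 / 4
                  - (9 / 4) * (deriv f ((α + e) - (2 / 3) * (f (α + e) / deriv f (α + e)))
                      / deriv f (α + e))
                  + (deriv f ((α + e) - (2 / 3) * (f (α + e) / deriv f (α + e)))
                      / deriv f (α + e)) ^ 2)
              * (f (α + e) / deriv f (α + e)))
          - α)
      =O[nhds 0] fun e : ℝ => e ^ 4 := by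
  have hgdef : True := trivial
  set g : ℝ → ℝ := fun e => f (α + e) with hgd
  set G : ℝ → ℝ := fun e => deriv f (α + e) with hGd
  have hGg : deriv g = G := by
    funext e
    exact deriv_comp_const_add f α e
  have hg5 : ContDiffAt ℝ 5 g 0 := by
    have h1 : ContDiffAt ℝ 5 (fun e : ℝ => α + e) 0 :=
      (contDiff_const.add contDiff_id).contDiffAt
    have h2 : ContDiffAt ℝ 5 f ((fun e : ℝ => α + e) 0) := by simpa using hf
    exact h2.comp 0 h1
  have hG4 : ContDiffAt ℝ 4 G 0 := by
    rw [← hGg]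
    exact contDiffAt_deriv_succ (n := 4) (by exact_mod_cast hg5)
  set P : ℝ := deriv f α with hPd
  set Q : ℝ := iteratedDeriv 2 g 0 / 2 with hQd
  set R : ℝ := iteratedDeriv 3 g 0 / 6 with hRd
  have hPne : P ≠ 0 := hd
  have hG0 : G 0 = P := by rw [hGd, hPd]; simp
  have hg00 : g 0 = 0 := by rw [hgd]; simpa using hroot
  have hg10 : iteratedDeriv 1 g 0 = P := by
    rw [iteratedDeriv_one, hGg, hG0]
  have hg20 : iteratedDeriv 1 G 0 = 2 * Q := by
    rw [← hGg, ← iteratedDeriv_succ', show (1 + 1 : ℕ) = 2 from rfl, hQd]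
    ring
  have hg30 : iteratedDeriv 2 G 0 = 6 * R := by
    rw [← hGg, show (2:ℕ) = 1 + 1 from rfl, ← iteratedDeriv_succ', hRd]
    ring
  -- Taylor expansions
  have hgc : (fun e : ℝ => g e - (P*e + Q*e^2 + R*e^3)) =O[nhds (0:ℝ)] fun e => e ^ 4 := by
    have h1 := taylor_peano 4 g (hg5.of_le (by norm_num))
    refine h1.congr_left fun e => ?_
    rw [Finset.sum_range_succ, Finset.sum_range_succ, Finset.sum_range_succ,
      Finset.sum_range_one, iteratedDeriv_zero, hg00, hg10, hQd, hRd]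
    norm_num [Nat.factorial]
  have hGc : (fun e : ℝ => G e - (P + 2*Q*e + 3*R*e^2)) =O[nhds (0:ℝ)] fun e => e ^ 3 := by
    have h1 := taylor_peano 3 G (hG4.of_le (by norm_num))
    refine h1.congr_left fun e => ?_
    rw [Finset.sum_range_succ, Finset.sum_range_succ, Finset.sum_range_one,
      iteratedDeriv_zero, hG0, hg20, hg30]
    simp [Nat.factorial]
    exact Or.inl (by ring)
  -- basic facts
  have hGcont : ContinuousAt G 0 := hG4.continuousAt
  have hG0ne : G 0 ≠ 0 := by rw [hG0]; exact hPne
  have hGne : ∀ᶠ e in nhds (0:ℝ), G e ≠ 0 := hGcont.eventually_ne hG0ne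
  have hGinv : (fun e : ℝ => (G e)⁻¹) =O[nhds (0:ℝ)] (fun _ => (1:ℝ)) :=
    (hGcont.tendsto.inv₀ hG0ne).isBigO_one ℝ
  have hpowO : ∀ m k : ℕ, k ≤ m → (fun e : ℝ => e ^ m) =O[nhds (0:ℝ)] fun e => e ^ k := by
    intro m k hk
    have h1 : (fun e : ℝ => e ^ m) = fun e => e ^ k * e ^ (m - k) := by
      funext e; rw [← pow_add]; congr 1; omega
    rw [h1]
    have h2 : Tendsto (fun e : ℝ => e ^ (m - k)) (nhds 0) (nhds ((0:ℝ) ^ (m - k))) :=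
      (continuous_pow (m-k)).tendsto 0
    exact ((isBigO_refl (fun e : ℝ => e ^ k) _).mul (h2.isBigO_one ℝ)).congr_right
      fun e => mul_one _
  have hO1 : ∀ (V : ℝ → ℝ), Continuous V → (fun e : ℝ => V e) =O[nhds (0:ℝ)] (fun _ => (1:ℝ)) :=
    fun V hV => (hV.tendsto 0).isBigO_one ℝ
  -- the approximating polynomials
  set U : ℝ → ℝ := fun e => e - Q/P*e^2 + (2*Q^2/P^2 - 2*R/P)*e^3 with hUd
  set Z : ℝ → ℝ := fun e => e - 2/3*U e with hZd
  set T : ℝ → ℝ := fun e => 1 - 4/3*(Q/P)*e + (4*Q^2/P^2 - 8/3*(R/P))*e^2 with hTd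
  set u : ℝ → ℝ := fun e => g e / G e with hud
  set z : ℝ → ℝ := fun e => e - 2/3 * u e with hzd
  set t : ℝ → ℝ := fun e => G (z e) / G e with htd
  have hUe : U =O[nhds (0:ℝ)] fun e => e ^ 1 := by
    have h1 : U = fun e : ℝ => e ^ 1 * (1 - Q/P*e + (2*Q^2/P^2 - 2*R/P)*e^2) := by
      funext e; rw [hUd]; ring
    rw [h1]
    exact ((isBigO_refl _ _).mul (hO1 _ (by fun_prop))).congr_right fun e => mul_one _
  have hZe : Z =O[nhds (0:ℝ)] fun e => e ^ 1 := by
    have h1 : Z = fun e : ℝ => e ^ 1 * (1/3 + 2/3*(Q/P)*e - 2/3*(2*Q^2/P^2 - 2*R/P)*e^2) := by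
      funext e; rw [hZd, hUd]; ring
    rw [h1]
    exact ((isBigO_refl _ _).mul (hO1 _ (by fun_prop))).congr_right fun e => mul_one _
  -- u - U = O(e^4)
  have hK1 : ∀ e : ℝ, (P*e + Q*e^2 + R*e^3) - U e * (P + 2*Q*e + 3*R*e^2)
      = e^4 * ((7)*Q*R/P + (-4)*Q^3/P^2 + ((6)*R^2/P + (-6)*Q^2*R/P^2)*e) := by
    intro e; rw [hUd]; field_simp [hPne]; ring
  have hgUG : (fun e : ℝ => g e - U e * G e) =O[nhds (0:ℝ)] fun e => e ^ 4 := by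
    have h1 : (fun e : ℝ => g e - U e * G e)
        = fun e => (g e - (P*e + Q*e^2 + R*e^3))
            - U e * (G e - (P + 2*Q*e + 3*R*e^2))
            + ((P*e + Q*e^2 + R*e^3) - U e * (P + 2*Q*e + 3*R*e^2)) := by
      funext e; ring
    rw [h1]
    refine IsBigO.add (IsBigO.sub hgc ?_) ?_
    · exact (hUe.mul hGc).congr_right fun e => by ring
    · refine IsBigO.congr_left ?_ fun e => (hK1 e).symm
      exact ((isBigO_refl (fun e : ℝ => e ^ 4) _).mul (hO1 _ (by fun_prop))).congr_right
        fun e => mul_one _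
  have hu4 : (fun e : ℝ => u e - U e) =O[nhds (0:ℝ)] fun e : ℝ => e ^ 4 := by
    have h1 : (fun e : ℝ => (g e - U e * G e) * (G e)⁻¹) =ᶠ[nhds (0:ℝ)]
        fun e => u e - U e := by
      filter_upwards [hGne] with e he
      rw [hud]
      field_simp
    exact (((hgUG.mul hGinv).congr_right fun e => mul_one _).congr' h1
      (EventuallyEq.refl _ _))
  -- z and Z
  have hz4 : (fun e : ℝ => z e - Z e) =O[nhds (0:ℝ)] fun e : ℝ => e ^ 4 := by
    have h1 : (fun e : ℝ => z e - Z e) = fun e => (-(2/3)) * (u e - U e) := by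
      funext e; simp only [hzd, hZd]; ring
    rw [h1]; exact hu4.const_mul_left _
  have hpow1tend : Tendsto (fun e : ℝ => e ^ 1) (nhds 0) (nhds (0:ℝ)) := by
    simpa using (continuous_pow 1).tendsto (0:ℝ)
  have hpow3tend : Tendsto (fun e : ℝ => e ^ 3) (nhds 0) (nhds (0:ℝ)) := by
    simpa using (continuous_pow 3).tendsto (0:ℝ)
  have hzOe : z =O[nhds (0:ℝ)] fun e => e ^ 1 :=
    ((hz4.trans (hpowO 4 1 (by norm_num))).add hZe).congr_left fun e => by ring
  have hztend : Tendsto z (nhds (0:ℝ)) (nhds 0) := hzOe.trans_tendsto hpow1tend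
  have hZtend : Tendsto Z (nhds (0:ℝ)) (nhds 0) := hZe.trans_tendsto hpow1tend
  have hGz : (fun e : ℝ => G (z e) - (P + 2*Q*z e + 3*R*(z e)^2)) =O[nhds (0:ℝ)]
      fun e => e ^ 3 := by
    have h1 := hGc.comp_tendsto hztend
    simp only [Function.comp_def] at h1
    exact h1.trans ((hzOe.pow 3).congr_right fun e => by ring)
  have hswap : (fun e : ℝ => (P + 2*Q*z e + 3*R*(z e)^2) - (P + 2*Q*Z e + 3*R*(Z e)^2))
      =O[nhds (0:ℝ)] fun e => e ^ 4 := by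
    have h1 : (fun e : ℝ => (P + 2*Q*z e + 3*R*(z e)^2) - (P + 2*Q*Z e + 3*R*(Z e)^2))
        = fun e => 2*Q*(z e - Z e) + 3*R*((z e - Z e) * (z e + Z e)) := by
      funext e; ring
    rw [h1]
    refine (hz4.const_mul_left _).add (IsBigO.const_mul_left ?_ _)
    exact (hz4.mul ((hztend.add hZtend).isBigO_one ℝ)).congr_right fun e => mul_one _
  have hNum : (fun e : ℝ => G (z e) - (P + 2*Q*Z e + 3*R*(Z e)^2)) =O[nhds (0:ℝ)]
      fun e => e ^ 3 := by
    have h1 := hGz.add (hswap.trans (hpowO 4 3 (by norm_num)))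
    exact h1.congr_left fun e => by ring
  -- t - T = O(e^3)
  have hK2 : ∀ e : ℝ, (P + 2*Q*Z e + 3*R*(Z e)^2) - T e * (P + 2*Q*e + 3*R*e^2)
      = e^3 * ((40/3)*Q*R/P + (-32/3)*Q^3/P^2 + ((32/3)*R^2/P + (-40/3)*Q^2*R/P^2)*e
          + ((16/3)*Q*R^2/P^2 + (-16/3)*Q^3*R/P^3)*e^2
          + ((16/3)*R^3/P^2 + (-32/3)*Q^2*R^2/P^3 + (16/3)*Q^4*R/P^4)*e^3) := by
    intro e; simp only [hZd, hUd, hTd]; field_simp [hPne]; ring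
  have hTcont : Continuous T := by rw [hTd]; fun_prop
  have hGzTG : (fun e : ℝ => G (z e) - T e * G e) =O[nhds (0:ℝ)] fun e => e ^ 3 := by
    have h1 : (fun e : ℝ => G (z e) - T e * G e)
        = fun e => (G (z e) - (P + 2*Q*Z e + 3*R*(Z e)^2))
            + ((P + 2*Q*Z e + 3*R*(Z e)^2) - T e * (P + 2*Q*e + 3*R*e^2))
            + (-(T e * (G e - (P + 2*Q*e + 3*R*e^2)))) := by
      funext e; ring
    rw [h1]
    refine (hNum.add ?_).add ?_
    · refine IsBigO.congr_left ?_ fun e => (hK2 e).symm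
      exact ((isBigO_refl (fun e : ℝ => e ^ 3) _).mul (hO1 _ (by fun_prop))).congr_right
        fun e => mul_one _
    · exact (((hO1 T hTcont).mul hGc).congr_right fun e => one_mul _).neg_left
  have ht3 : (fun e : ℝ => t e - T e) =O[nhds (0:ℝ)] fun e : ℝ => e ^ 3 := by
    have h1 : (fun e : ℝ => (G (z e) - T e * G e) * (G e)⁻¹) =ᶠ[nhds (0:ℝ)]
        fun e => t e - T e := by
      filter_upwards [hGne] with e he
      rw [htd]
      field_simp
    exact (((hGzTG.mul hGinv).congr_right fun e => mul_one _).congr' h1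
      (EventuallyEq.refl _ _))
  have hT0 : T 0 = 1 := by rw [hTd]; norm_num
  have hTtend : Tendsto T (nhds (0:ℝ)) (nhds 1) := hT0 ▸ hTcont.tendsto 0
  have htt : Tendsto t (nhds (0:ℝ)) (nhds 1) := by
    have h1 := (ht3.trans_tendsto hpow3tend).add hTtend
    simpa using h1
  -- the weight function
  set W : ℝ → ℝ := fun s => 1/2*(3 - s)*(9/4 - 9/4*s + s^2) with hWd
  have hqfact : ∀ s s' : ℝ, W s - W s'
      = (s - s') * (-(9/2) + (21/8)*(s + s') - (1/2)*(s^2 + s*s' + s'^2)) := by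
    intro s s'; simp only [hWd]; ring
  have hqO1 : (fun e : ℝ => -(9/2) + (21/8)*(t e + T e)
      - (1/2)*((t e)^2 + t e * T e + (T e)^2)) =O[nhds (0:ℝ)] (fun _ => (1:ℝ)) := by
    have hprod : Tendsto (fun e : ℝ => (t e, T e)) (nhds 0) (nhds (1, 1)) :=
      htt.prodMk_nhds hTtend
    have hc2 : Continuous (fun p : ℝ × ℝ =>
        -(9/2:ℝ) + (21/8)*(p.1 + p.2) - (1/2)*(p.1^2 + p.1*p.2 + p.2^2)) := by fun_prop
    exact ((hc2.tendsto _).comp hprod).isBigO_one ℝ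
  have hW3 : (fun e : ℝ => W (t e) - W (T e)) =O[nhds (0:ℝ)] fun e : ℝ => e ^ 3 :=
    ((ht3.mul hqO1).congr_right fun e => mul_one _).congr_left
      fun e => (hqfact (t e) (T e)).symm
  have hWT1 : (fun e : ℝ => W (T e)) =O[nhds (0:ℝ)] (fun _ => (1:ℝ)) := by
    refine hO1 _ ?_
    simp only [hWd, hTd]
    fun_prop
  have huOe : u =O[nhds (0:ℝ)] fun e => e ^ 1 :=
    ((hu4.trans (hpowO 4 1 (by norm_num))).add hUe).congr_left fun e => by ring
  have hK3 : ∀ e : ℝ, e - W (T e) * U e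
      = e^4 * ((-4)*Q*R/P^2 + (211/27)*Q^3/P^3
        + ((-4)*R^2/P^2 + (170/9)*Q^2*R/P^3 + (-436/27)*Q^4/P^4)*e
        + ((88/9)*Q*R^2/P^3 + (-320/27)*Q^3*R/P^4 + (-82/27)*Q^5/P^5)*e^2
        + ((176/27)*R^3/P^3 + (64/9)*Q^2*R^2/P^4 + (-524/9)*Q^4*R/P^5 + (148/3)*Q^6/P^6)*e^3
        + ((1024/27)*Q*R^3/P^4 + (-1408/9)*Q^3*R^2/P^5 + (640/3)*Q^5*R/P^6 + (-96)*Q^7/P^7)*e^4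
        + ((512/27)*R^4/P^4 + (-2816/27)*Q^2*R^3/P^5 + (640/3)*Q^4*R^2/P^6 + (-192)*Q^6*R/P^7
            + (64)*Q^8/P^8)*e^5) := by
    intro e; simp only [hWd, hTd, hUd]; field_simp [hPne]; ring
  have hfinal : (fun e : ℝ => e - W (t e) * u e) =O[nhds (0:ℝ)] fun e : ℝ => e ^ 4 := by
    have h1 : (fun e : ℝ => e - W (t e) * u e)
        = fun e => (e - W (T e) * U e) - W (T e) * (u e - U e) - ((W (t e) - W (T e)) * u e) := by
      funext e; ring
    rw [h1]
    refine IsBigO.sub (IsBigO.sub ?_ ?_) ?_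
    · refine IsBigO.congr_left ?_ fun e => (hK3 e).symm
      exact ((isBigO_refl (fun e : ℝ => e ^ 4) _).mul (hO1 _ (by fun_prop))).congr_right
        fun e => mul_one _
    · exact (hWT1.mul hu4).congr_right fun e => one_mul _
    · exact (hW3.mul huOe).congr_right fun e => by ring
  refine hfinal.congr_left fun e => ?_
  simp only [hWd, htd, hud, hzd, hgd, hGd]
  rw [show α + (e - 2/3 * (f (α + e) / deriv f (α + e)))
      = (α + e) - 2/3 * (f (α + e) / deriv f (α + e)) from by ring]
  ring
end

section
/- Let F : ℝⁿ → ℝⁿ be C⁴ in a convex neighborhood of a root α with F' continuous and F'(α) invertible. Define the two-step iteration Y = X - [F'(X)]⁻¹F(X), X₊ = X - (1/2)(3I - [F'(X)]⁻¹F'(Y))·[F'(X)]⁻¹F(X). Then there exist constants δ > 0 and K > 0 such that for all X with ‖X - α‖ < δ, ‖X₊ - α‖ ≤ K‖X - α‖³; i.e., the multivariate Chun method has third-order convergence. -/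
set_option maxHeartbeats 3000000

open ContinuousLinearMap

section Aux

variable {E G : Type*} [NormedAddCommGroup E] [NormedSpace ℝ E]
  [NormedAddCommGroup G] [NormedSpace ℝ G]

lemma seg_norm_le {x y z : E} (hz : z ∈ segment ℝ x y) : ‖z - x‖ ≤ ‖y - x‖ := by
  obtain ⟨a, b, ha, hb, hab, rfl⟩ := hz
  have ha' : a = 1 - b := by linarith
  subst ha'
  have : (1 - b) • x + b • y - x = b • (y - x) := by module
  rw [this, norm_smul, Real.norm_of_nonneg hb]
  have hb1 : b ≤ 1 := by linarith
  nlinarith [norm_nonneg (y - x)]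

lemma opnorm_bound (L : E →L[ℝ] G) {a : E} {q x : ℝ} (hL : ‖L‖ ≤ q) (ha : ‖a‖ ≤ x) :
    ‖L a‖ ≤ q * x :=
  (L.le_opNorm a).trans (mul_le_mul hL ha (norm_nonneg _) ((norm_nonneg L).trans hL))

lemma opnorm_bound₂ (Q : E →L[ℝ] E →L[ℝ] G) {a b : E} {q x y : ℝ}
    (hQ : ‖Q‖ ≤ q) (ha : ‖a‖ ≤ x) (hb : ‖b‖ ≤ y) : ‖Q a b‖ ≤ q * x * y :=
  opnorm_bound (Q a) (opnorm_bound Q hQ ha) hb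

lemma taylor_first {s : Set E} (hs : Convex ℝ s) {g : E → G} {g' : E → E →L[ℝ] G}
    (hg : ∀ z ∈ s, HasFDerivAt g (g' z) z) {x y : E} (hx : x ∈ s) (hy : y ∈ s)
    {P : E →L[ℝ] G} {C : ℝ} (hC : ∀ z ∈ s, ‖g' z - P‖ ≤ C) :
    ‖g y - g x - P (y - x)‖ ≤ C * ‖y - x‖ := by
  have hder : ∀ z ∈ s, HasFDerivAt (fun w => g w - P (w - x)) (g' z - P) z := by
    intro z hz
    have h1 : HasFDerivAt (fun w : E => P (w - x)) P z := by
      exact P.hasFDerivAt.comp z ((hasFDerivAt_id z).sub_const x)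
    exact (hg z hz).sub h1
  have := Convex.norm_image_sub_le_of_norm_hasFDerivWithin_le
    (f := fun w => g w - P (w - x)) (f' := fun z => g' z - P)
    (fun z hz => (hder z hz).hasFDerivWithinAt) hC hs hx hy
  have heq : (g y - P (y - x)) - (g x - P (x - x)) = g y - g x - P (y - x) := by
    simp; abel
  rwa [heq] at this

lemma lip_bound {s : Set E} (hs : Convex ℝ s) {g : E → G} {g' : E → E →L[ℝ] G}
    (hg : ∀ z ∈ s, HasFDerivAt g (g' z) z) {x y : E} (hx : x ∈ s) (hy : y ∈ s)
    {C : ℝ} (hC : ∀ z ∈ s, ‖g' z‖ ≤ C) : ‖g y - g x‖ ≤ C * ‖y - x‖ := by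
  have := taylor_first hs hg hx hy (P := 0) (by simpa using hC)
  simpa using this

lemma taylor_second {s : Set E} (hs : Convex ℝ s) {g : E → G} {g' : E → E →L[ℝ] G}
    (hg : ∀ z ∈ s, HasFDerivAt g (g' z) z) {x y : E} (hx : x ∈ s) (hy : y ∈ s)
    {Q : E →L[ℝ] E →L[ℝ] G} (hQ : ∀ v w, Q v w = Q w v) {C : ℝ}
    (hC : ∀ z ∈ s, ‖g' z - g' x - Q (z - x)‖ ≤ C) :
    ‖g y - g x - g' x (y - x) - (1/2 : ℝ) • Q (y - x) (y - x)‖ ≤ C * ‖y - x‖ := by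
  set f : E → G := fun w => g w - g' x (w - x) - (1/2 : ℝ) • Q (w - x) (w - x) with hf
  have hder : ∀ z ∈ s, HasFDerivAt f (g' z - g' x - Q (z - x)) z := by
    intro z hz
    have h1 : HasFDerivAt (fun w : E => g' x (w - x)) (g' x) z := by
      exact (g' x).hasFDerivAt.comp z ((hasFDerivAt_id z).sub_const x)
    have hc : HasFDerivAt (fun w : E => Q (w - x)) Q z := by
      exact Q.hasFDerivAt.comp z ((hasFDerivAt_id z).sub_const x)
    have hu : HasFDerivAt (fun w : E => w - x) (ContinuousLinearMap.id ℝ E) z := by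
      simpa using (hasFDerivAt_id z).sub_const x
    have h2 := (hc.clm_apply hu).const_smul (1/2 : ℝ)
    have heq : (1/2 : ℝ) • ((Q (z - x)).comp (ContinuousLinearMap.id ℝ E)
        + Q.flip (z - x)) = Q (z - x) := by
      ext w
      simp only [ContinuousLinearMap.smul_apply, ContinuousLinearMap.add_apply,
        ContinuousLinearMap.comp_apply, ContinuousLinearMap.coe_id', id_eq,
        ContinuousLinearMap.flip_apply]
      rw [hQ w (z - x)]
      module
    rw [heq] at h2
    exact ((hg z hz).sub h1).sub h2
  have := Convex.norm_image_sub_le_of_norm_hasFDerivWithin_le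
    (f := f) (f' := fun z => g' z - g' x - Q (z - x))
    (fun z hz => (hder z hz).hasFDerivWithinAt) hC hs hx hy
  have heq : f y - f x = g y - g x - g' x (y - x) - (1/2 : ℝ) • Q (y - x) (y - x) := by
    simp [hf]; abel
  rwa [heq] at this

end Aux

/-- Theorem 2.1: the multivariate Chun method has third-order convergence. -/
theorem multivariate_chun_third_order (n : ℕ) (F : (Fin n → ℝ) → (Fin n → ℝ))
    (α : Fin n → ℝ) (D : Set (Fin n → ℝ)) (hD : Convex ℝ D) (hDnhds : D ∈ nhds α)
    (hF : ContDiffOn ℝ 4 F D) (hroot : F α = 0) (hA : IsUnit (fderiv ℝ F α)) :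
    ∃ δ > (0 : ℝ), ∃ K > (0 : ℝ), ∀ X : Fin n → ℝ, ‖X - α‖ < δ →
      ‖(X - (1 / 2 : ℝ) •
          (((3 : ℝ) • ContinuousLinearMap.id ℝ (Fin n → ℝ)
              - (Ring.inverse (fderiv ℝ F X)).comp
                  (fderiv ℝ F (X - (Ring.inverse (fderiv ℝ F X)) (F X))))
            ((Ring.inverse (fderiv ℝ F X)) (F X)))) - α‖
        ≤ K * ‖X - α‖ ^ 3 := by
  classical
  set A : (Fin n → ℝ) → (Fin n → ℝ) →L[ℝ] (Fin n → ℝ) := fderiv ℝ F with hAdef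
  set A2 := fderiv ℝ A with hA2def
  set A3 := fderiv ℝ A2 with hA3def
  set U := interior D with hUdef
  have hUopen : IsOpen U := isOpen_interior
  have hαU : α ∈ U := mem_interior_iff_mem_nhds.2 hDnhds
  have hFU : ContDiffOn ℝ 4 F U := hF.mono interior_subset
  have hA1' : ContDiffOn ℝ 3 A U := hFU.fderiv_of_isOpen hUopen (by norm_num)
  have hA2' : ContDiffOn ℝ 2 A2 U := hA1'.fderiv_of_isOpen hUopen (by norm_num)
  letI : NormedAddCommGroup ((Fin n → ℝ) →L[ℝ] (Fin n → ℝ) →L[ℝ] Fin n → ℝ) :=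
    ContinuousLinearMap.toNormedAddCommGroup (𝕜 := ℝ) (𝕜₂ := ℝ) (E := Fin n → ℝ) (F := ((Fin n → ℝ) →L[ℝ] Fin n → ℝ)) (σ₁₂ := RingHom.id ℝ)
  letI : NormedSpace ℝ ((Fin n → ℝ) →L[ℝ] (Fin n → ℝ) →L[ℝ] Fin n → ℝ) :=
    ContinuousLinearMap.toNormedSpace (𝕜 := ℝ) (𝕜₂ := ℝ) (E := Fin n → ℝ) (F := ((Fin n → ℝ) →L[ℝ] Fin n → ℝ)) (σ₁₂ := RingHom.id ℝ)
  letI : NormedAddCommGroup ((Fin n → ℝ) →L[ℝ] (Fin n → ℝ) →L[ℝ] (Fin n → ℝ) →L[ℝ] Fin n → ℝ) :=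
    ContinuousLinearMap.toNormedAddCommGroup (𝕜 := ℝ) (𝕜₂ := ℝ) (E := Fin n → ℝ) (F := ((Fin n → ℝ) →L[ℝ] (Fin n → ℝ) →L[ℝ] Fin n → ℝ)) (σ₁₂ := RingHom.id ℝ)
  letI : NormedSpace ℝ ((Fin n → ℝ) →L[ℝ] (Fin n → ℝ) →L[ℝ] (Fin n → ℝ) →L[ℝ] Fin n → ℝ) :=
    ContinuousLinearMap.toNormedSpace (𝕜 := ℝ) (𝕜₂ := ℝ) (E := Fin n → ℝ) (F := ((Fin n → ℝ) →L[ℝ] (Fin n → ℝ) →L[ℝ] Fin n → ℝ)) (σ₁₂ := RingHom.id ℝ)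
  have hA3' : ContDiffOn ℝ 1 A3 U := hA2'.fderiv_of_isOpen hUopen (by norm_num)
  have hdF : ∀ Z ∈ U, HasFDerivAt F (A Z) Z := fun Z hZ =>
    ((hFU.contDiffAt (hUopen.mem_nhds hZ)).differentiableAt (by norm_num)).hasFDerivAt
  have hdA : ∀ Z ∈ U, HasFDerivAt A (A2 Z) Z := fun Z hZ =>
    ((hA1'.contDiffAt (hUopen.mem_nhds hZ)).differentiableAt (by norm_num)).hasFDerivAt
  have hdA2 : ∀ Z ∈ U, HasFDerivAt A2 (A3 Z) Z := fun Z hZ =>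
    ((hA2'.contDiffAt (hUopen.mem_nhds hZ)).differentiableAt (by norm_num)).hasFDerivAt
  have hsymm : ∀ Z ∈ U, ∀ v w, A2 Z v w = A2 Z w v := by
    intro Z hZ
    exact (hFU.contDiffAt (hUopen.mem_nhds hZ)).isSymmSndFDerivAt (by norm_num)
  have hcontA : ContinuousOn A U := hA1'.continuousOn
  have hAα : ContinuousAt A α := hcontA.continuousAt (hUopen.mem_nhds hαU)
  have hunits : {Z : Fin n → ℝ | IsUnit (A Z)} ∈ nhds α :=
    hAα.preimage_mem_nhds (Units.isOpen.mem_nhds hA)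
  obtain ⟨ε, hε, hKsub⟩ : ∃ ε > (0:ℝ), Metric.closedBall α ε ⊆
      U ∩ {Z : Fin n → ℝ | IsUnit (A Z)} := by
    rcases Metric.mem_nhds_iff.1 (Filter.inter_mem (hUopen.mem_nhds hαU) hunits) with
      ⟨r, hr, hball⟩
    exact ⟨r/2, by linarith, (Metric.closedBall_subset_ball (by linarith)).trans hball⟩
  set Kb := Metric.closedBall α ε with hKbdef
  have hKU : ∀ Z ∈ Kb, Z ∈ U := fun Z hZ => (hKsub hZ).1
  have hKunit : ∀ Z ∈ Kb, IsUnit (A Z) := fun Z hZ => (hKsub hZ).2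
  have hKconv : Convex ℝ Kb := convex_closedBall α ε
  have hKcomp : IsCompact Kb := isCompact_closedBall α ε
  have hαK : α ∈ Kb := Metric.mem_closedBall_self hε.le
  have hcontB : ContinuousOn (fun Z => Ring.inverse (A Z)) Kb := by
    intro Z hZ
    have h1 : ContinuousAt A Z := hcontA.continuousAt (hUopen.mem_nhds (hKU Z hZ))
    have h2 : ContinuousAt Ring.inverse (A Z) := by
      have := NormedRing.inverse_continuousAt (hKunit Z hZ).unit
      rwa [(hKunit Z hZ).unit_spec] at this
    exact (h2.comp h1).continuousWithinAt
  obtain ⟨M0, hM0⟩ := hKcomp.exists_bound_of_continuousOn hcontB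
  obtain ⟨M1', hM1'⟩ := hKcomp.exists_bound_of_continuousOn (hcontA.mono hKU)
  obtain ⟨M2', hM2'⟩ := hKcomp.exists_bound_of_continuousOn (f := A2) (hA2'.continuousOn.mono hKU)
  obtain ⟨M3', hM3'⟩ := hKcomp.exists_bound_of_continuousOn (f := A3) (hA3'.continuousOn.mono hKU)
  set M := max M0 1 with hMdef
  set M1 := max M1' 1 with hM1def
  set M2 := max M2' 1 with hM2def
  set M3 := max M3' 1 with hM3def
  have hM : ∀ Z ∈ Kb, ‖Ring.inverse (A Z)‖ ≤ M := fun Z hZ => (hM0 Z hZ).trans (le_max_left _ _)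
  have hM1 : ∀ Z ∈ Kb, ‖A Z‖ ≤ M1 := fun Z hZ => (hM1' Z hZ).trans (le_max_left _ _)
  have hM2 : ∀ Z ∈ Kb, ‖A2 Z‖ ≤ M2 := fun Z hZ => (hM2' Z hZ).trans (le_max_left _ _)
  have hM3 : ∀ Z ∈ Kb, ‖A3 Z‖ ≤ M3 := fun Z hZ => (hM3' Z hZ).trans (le_max_left _ _)
  have hM_1 : (1:ℝ) ≤ M := le_max_right _ _
  have hM1_1 : (1:ℝ) ≤ M1 := le_max_right _ _
  have hM2_1 : (1:ℝ) ≤ M2 := le_max_right _ _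
  have hM3_1 : (1:ℝ) ≤ M3 := le_max_right _ _
  have hM3_0 : (0:ℝ) ≤ M3 := by linarith
  -- Lipschitz estimates on Kb
  have lipF : ∀ x ∈ Kb, ∀ y ∈ Kb, ‖F y - F x‖ ≤ M1 * ‖y - x‖ := fun x hx y hy =>
    lip_bound hKconv (fun z hz => hdF z (hKU z hz)) hx hy (fun z hz => hM1 z hz)
  have lipA2 : ∀ x ∈ Kb, ∀ y ∈ Kb, ‖A2 y - A2 x‖ ≤ M3 * ‖y - x‖ := fun x hx y hy =>
    lip_bound hKconv (fun z hz => hdA2 z (hKU z hz)) hx hy (fun z hz => hM3 z hz)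
  have tayA : ∀ x ∈ Kb, ∀ y ∈ Kb, ‖A y - A x - A2 x (y - x)‖ ≤ M3 * ‖y - x‖ * ‖y - x‖ := by
    intro x hx y hy
    have hseg : segment ℝ x y ⊆ Kb := hKconv.segment_subset hx hy
    exact taylor_first (convex_segment x y)
      (fun z hz => hdA z (hKU z (hseg hz)))
      (left_mem_segment ℝ x y) (right_mem_segment ℝ x y)
      (fun z hz => by
        have h1 := lipA2 x hx z (hseg hz)
        have h2 : ‖z - x‖ ≤ ‖y - x‖ := seg_norm_le hz
        calc ‖A2 z - A2 x‖ ≤ M3 * ‖z - x‖ := h1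
        _ ≤ M3 * ‖y - x‖ := mul_le_mul_of_nonneg_left h2 hM3_0)
  have tayF2 : ∀ x ∈ Kb, ∀ y ∈ Kb,
      ‖F y - F x - A x (y - x) - (1/2 : ℝ) • A2 x (y - x) (y - x)‖
        ≤ M3 * ‖y - x‖ * ‖y - x‖ * ‖y - x‖ := by
    intro x hx y hy
    have hseg : segment ℝ x y ⊆ Kb := hKconv.segment_subset hx hy
    exact taylor_second (convex_segment x y)
      (fun z hz => hdF z (hKU z (hseg hz)))
      (left_mem_segment ℝ x y) (right_mem_segment ℝ x y)
      (hsymm x (hKU x hx)) (C := M3 * ‖y - x‖ * ‖y - x‖)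
      (fun z hz => by
        have h1 := tayA x hx z (hseg hz)
        have h2 : ‖z - x‖ ≤ ‖y - x‖ := seg_norm_le hz
        have h4 := mul_self_le_mul_self (norm_nonneg (z - x)) h2
        calc ‖A z - A x - A2 x (z - x)‖ ≤ M3 * ‖z - x‖ * ‖z - x‖ := h1
        _ = M3 * (‖z - x‖ * ‖z - x‖) := by ring
        _ ≤ M3 * (‖y - x‖ * ‖y - x‖) := mul_le_mul_of_nonneg_left h4 hM3_0
        _ = M3 * ‖y - x‖ * ‖y - x‖ := by ring)
  -- constants
  set C0 := M * M1 with hC0def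
  set C1 := M * (M2 + M3) with hC1def
  have hC0_1 : (1:ℝ) ≤ C0 := by
    rw [hC0def]
    calc (1:ℝ) = 1 * 1 := by ring
    _ ≤ M * M1 := mul_le_mul hM_1 hM1_1 (by norm_num) (by linarith)
  have hC1_1 : (1:ℝ) ≤ C1 := by
    rw [hC1def]
    calc (1:ℝ) = 1 * 1 := by ring
    _ ≤ M * (M2 + M3) := mul_le_mul hM_1 (by linarith) (by norm_num) (by linarith)
  set Kc := M * M3 * (1 + C0^3) + M * M2 * C1 * (C0 + 1) with hKcdef
  have hKcpos : (0:ℝ) < Kc := by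
    rw [hKcdef]
    have p1 : (0:ℝ) < M := by linarith
    have p2 : (0:ℝ) < M2 := by linarith
    have p3 : (0:ℝ) < M3 := by linarith
    have p4 : (0:ℝ) < C0 := by linarith
    have p5 : (0:ℝ) < C1 := by linarith
    have p6 : (0:ℝ) < 1 + C0^3 := by positivity
    have p7 : (0:ℝ) < C0 + 1 := by linarith
    exact add_pos (mul_pos (mul_pos p1 p3) p6) (mul_pos (mul_pos (mul_pos p1 p2) p5) p7)
  set δ := min ε (min 1 C1⁻¹) with hδdef
  have hδpos : (0:ℝ) < δ := by
    have h0 : (0:ℝ) < C1⁻¹ := by positivity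
    simp only [hδdef, lt_min_iff]
    exact ⟨hε, by norm_num, h0⟩
  refine ⟨δ, hδpos, Kc, hKcpos, ?_⟩
  intro X hXδ
  have ht0 : (0:ℝ) ≤ ‖X - α‖ := norm_nonneg _
  have htε : ‖X - α‖ ≤ ε := le_of_lt (lt_of_lt_of_le hXδ (min_le_left _ _))
  have ht1 : ‖X - α‖ ≤ 1 :=
    le_of_lt (lt_of_lt_of_le hXδ ((min_le_right _ _).trans (min_le_left _ _)))
  have htC1 : C1 * ‖X - α‖ ≤ 1 := by
    have h1 : ‖X - α‖ ≤ C1⁻¹ :=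
      le_of_lt (lt_of_lt_of_le hXδ ((min_le_right _ _).trans (min_le_right _ _)))
    have h2 : (0:ℝ) < C1 := by linarith
    calc C1 * ‖X - α‖ ≤ C1 * C1⁻¹ := mul_le_mul_of_nonneg_left h1 h2.le
    _ = 1 := mul_inv_cancel₀ (ne_of_gt h2)
  have hXK : X ∈ Kb := by
    simp only [hKbdef, Metric.mem_closedBall, dist_eq_norm]
    exact htε
  set B := Ring.inverse (A X) with hBdef
  set v := B (F X) with hvdef
  set Y := X - v with hYdef
  have huX : IsUnit (A X) := hKunit X hXK
  have hBA : ∀ w, B (A X w) = w := by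
    intro w
    rw [← ContinuousLinearMap.mul_apply, hBdef, Ring.inverse_mul_cancel _ huX,
      ContinuousLinearMap.one_apply]
  have hAB : ∀ w, A X (B w) = w := by
    intro w
    rw [← ContinuousLinearMap.mul_apply, hBdef, Ring.mul_inverse_cancel _ huX,
      ContinuousLinearMap.one_apply]
  have hMB : ‖B‖ ≤ M := hM X hXK
  have hFX : ‖F X‖ ≤ M1 * ‖X - α‖ := by
    have := lipF α hαK X hXK
    rwa [hroot, sub_zero] at this
  have hvb : ‖v‖ ≤ C0 * ‖X - α‖ := by
    have := opnorm_bound B hMB hFX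
    calc ‖v‖ ≤ M * (M1 * ‖X - α‖) := this
    _ = C0 * ‖X - α‖ := by rw [hC0def]; ring
  -- Newton step identity
  have hYα : Y - α = B (A X (X - α) - F X) := by
    have h1 : A X (Y - α) = A X (X - α) - F X := by
      have h0 : Y - α = (X - α) - v := by rw [hYdef]; abel
      rw [h0, map_sub, hvdef, hAB]
    rw [← h1, hBA]
  set H := (1/2 : ℝ) • B (A2 X (X - α) (X - α)) with hHdef
  have hR := tayF2 X hXK α hαK
  rw [norm_sub_rev α X] at hR
  have hid : A X (X - α) - F X =
      (1/2 : ℝ) • A2 X (X - α) (X - α) +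
      (F α - F X - A X (α - X) - (1/2 : ℝ) • A2 X (α - X) (α - X)) := by
    rw [hroot]
    have hax : α - X = -(X - α) := by abel
    simp only [hax, map_neg, ContinuousLinearMap.neg_apply, neg_neg]
    module
  have hYH : ‖(Y - α) - H‖ ≤ M * (M3 * ‖X - α‖ * ‖X - α‖ * ‖X - α‖) := by
    have hbr : (Y - α) - H = B (F α - F X - A X (α - X)
        - (1/2 : ℝ) • A2 X (α - X) (α - X)) := by
      rw [hYα, hid, map_add, map_smul, hHdef]
      abel
    rw [hbr]
    exact opnorm_bound B hMB hR
  have hHb : ‖H‖ ≤ M * (M2 * ‖X - α‖ * ‖X - α‖) := by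
    have h1 : ‖A2 X (X - α) (X - α)‖ ≤ M2 * ‖X - α‖ * ‖X - α‖ :=
      opnorm_bound₂ (A2 X) (hM2 X hXK) le_rfl le_rfl
    have h3 : ‖B (A2 X (X - α) (X - α))‖ ≤ M * (M2 * ‖X - α‖ * ‖X - α‖) :=
      opnorm_bound B hMB h1
    rw [hHdef, norm_smul]
    have h6 : ‖(1/2 : ℝ)‖ = 1/2 := by norm_num
    rw [h6]
    linarith [norm_nonneg (B (A2 X (X - α) (X - α)))]
  have hYb : ‖Y - α‖ ≤ C1 * (‖X - α‖ * ‖X - α‖) := by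
    have h1 : ‖Y - α‖ ≤ ‖(Y - α) - H‖ + ‖H‖ := by
      simpa using norm_add_le ((Y - α) - H) H
    have h2 : M * (M3 * ‖X - α‖ * ‖X - α‖ * ‖X - α‖)
        ≤ M * M3 * (‖X - α‖ * ‖X - α‖) := by
      have heq : M * (M3 * ‖X - α‖ * ‖X - α‖ * ‖X - α‖)
          = (M * M3 * (‖X - α‖ * ‖X - α‖)) * ‖X - α‖ := by ring
      rw [heq]
      have hnn : (0:ℝ) ≤ M * M3 * (‖X - α‖ * ‖X - α‖) := by positivity 
      calc (M * M3 * (‖X - α‖ * ‖X - α‖)) * ‖X - α‖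
          ≤ (M * M3 * (‖X - α‖ * ‖X - α‖)) * 1 := mul_le_mul_of_nonneg_left ht1 hnn
      _ = M * M3 * (‖X - α‖ * ‖X - α‖) := by ring
    have h3 : M * (M2 * ‖X - α‖ * ‖X - α‖) = M * M2 * (‖X - α‖ * ‖X - α‖) := by ring
    have h4 : C1 * (‖X - α‖ * ‖X - α‖)
        = M * M2 * (‖X - α‖ * ‖X - α‖) + M * M3 * (‖X - α‖ * ‖X - α‖) := by
      rw [hC1def]; ring
    rw [h4]
    linarith [hYH, hHb]
  have hYK : Y ∈ Kb := by
    simp only [hKbdef, Metric.mem_closedBall, dist_eq_norm]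
    have h1 : C1 * (‖X - α‖ * ‖X - α‖) ≤ ‖X - α‖ := by
      have heq : C1 * (‖X - α‖ * ‖X - α‖) = (C1 * ‖X - α‖) * ‖X - α‖ := by ring
      rw [heq]
      calc (C1 * ‖X - α‖) * ‖X - α‖ ≤ 1 * ‖X - α‖ :=
        mul_le_mul_of_nonneg_right htC1 ht0
      _ = ‖X - α‖ := by ring
    linarith
  have hrem := tayA X hXK Y hYK
  have hYX : Y - X = -v := by rw [hYdef]; abel
  have hnYX : ‖Y - X‖ ≤ C0 * ‖X - α‖ := by rw [hYX, norm_neg]; exact hvb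
  set T := (1/2 : ℝ) • B (A X v - A Y v) with hTdef
  have hgoal : X - (1 / 2 : ℝ) •
      (((3 : ℝ) • ContinuousLinearMap.id ℝ (Fin n → ℝ) - B.comp (A Y)) v) - α
      = ((Y - α) - H) - (T - H) := by
    have hAXv : B (A X v) = v := hBA v
    simp only [ContinuousLinearMap.sub_apply, ContinuousLinearMap.smul_apply,
      ContinuousLinearMap.coe_id', id_eq, ContinuousLinearMap.comp_apply,
      hTdef, map_sub, hAXv, hYdef]
    module
  have h0C0 : (0:ℝ) ≤ C0 * ‖X - α‖ := by positivity
  have hTH : ‖T - H‖ ≤ M * (M3 * (C0*‖X - α‖) * (C0*‖X - α‖) * (C0*‖X - α‖)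
      + M2 * (C1*(‖X - α‖*‖X - α‖)) * (C0*‖X - α‖)
      + M2 * ‖X - α‖ * (C1*(‖X - α‖*‖X - α‖))) := by
    have hvα : ‖v - (X - α)‖ ≤ C1 * (‖X - α‖ * ‖X - α‖) := by
      have h0 : v - (X - α) = α - Y := by rw [hYdef]; abel
      rw [h0, norm_sub_rev]
      exact hYb
    have hide : A X v - A Y v - A2 X (X - α) (X - α)
        = -((A Y - A X - A2 X (Y - X)) v) + A2 X (v - (X - α)) v
          + A2 X (X - α) (v - (X - α)) := by
      rw [hYX]
      simp only [ContinuousLinearMap.sub_apply, map_sub, map_neg,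
        ContinuousLinearMap.neg_apply]
      abel
    have hremb : ‖A Y - A X - A2 X (Y - X)‖ ≤ M3 * (C0*‖X - α‖) * (C0*‖X - α‖) := by
      calc ‖A Y - A X - A2 X (Y - X)‖ ≤ M3 * ‖Y - X‖ * ‖Y - X‖ := hrem
      _ ≤ M3 * (C0*‖X - α‖) * (C0*‖X - α‖) := by
          have ha : M3 * ‖Y - X‖ ≤ M3 * (C0*‖X - α‖) := mul_le_mul_of_nonneg_left hnYX hM3_0
          exact mul_le_mul ha hnYX (norm_nonneg _) (by positivity)
    have hb1 : ‖(A Y - A X - A2 X (Y - X)) v‖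
        ≤ M3 * (C0*‖X - α‖) * (C0*‖X - α‖) * (C0*‖X - α‖) :=
      opnorm_bound _ hremb hvb
    have hb2 : ‖A2 X (v - (X - α)) v‖ ≤ M2 * (C1*(‖X - α‖*‖X - α‖)) * (C0*‖X - α‖) :=
      opnorm_bound₂ (A2 X) (hM2 X hXK) hvα hvb
    have hb3 : ‖A2 X (X - α) (v - (X - α))‖ ≤ M2 * ‖X - α‖ * (C1*(‖X - α‖*‖X - α‖)) :=
      opnorm_bound₂ (A2 X) (hM2 X hXK) le_rfl hvα
    have hsum : ‖A X v - A Y v - A2 X (X - α) (X - α)‖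
        ≤ M3 * (C0*‖X - α‖) * (C0*‖X - α‖) * (C0*‖X - α‖)
          + M2 * (C1*(‖X - α‖*‖X - α‖)) * (C0*‖X - α‖)
          + M2 * ‖X - α‖ * (C1*(‖X - α‖*‖X - α‖)) := by
      rw [hide]
      have := norm_add₃_le (E := (Fin n → ℝ)) (a := -((A Y - A X - A2 X (Y - X)) v))
        (b := A2 X (v - (X - α)) v) (c := A2 X (X - α) (v - (X - α)))
      rw [norm_neg] at this
      linarith
    have hTHeq : T - H = (1/2 : ℝ) • B (A X v - A Y v - A2 X (X - α) (X - α)) := by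
      rw [hTdef, hHdef]
      simp only [map_sub, smul_sub]
    rw [hTHeq, norm_smul]
    have h6 : ‖(1/2 : ℝ)‖ = 1/2 := by norm_num
    rw [h6]
    have h5 := opnorm_bound B hMB hsum
    linarith [norm_nonneg (B (A X v - A Y v - A2 X (X - α) (X - α)))]
  rw [hgoal]
  calc ‖((Y - α) - H) - (T - H)‖ ≤ ‖(Y - α) - H‖ + ‖T - H‖ := norm_sub_le _ _
  _ ≤ Kc * ‖X - α‖ ^ 3 := by
      rw [hKcdef]
      have hexp : (M * M3 * (1 + C0^3) + M * M2 * C1 * (C0 + 1)) * ‖X - α‖ ^ 3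
          = M * (M3 * ‖X - α‖ * ‖X - α‖ * ‖X - α‖)
            + M * (M3 * (C0*‖X - α‖) * (C0*‖X - α‖) * (C0*‖X - α‖)
              + M2 * (C1*(‖X - α‖*‖X - α‖)) * (C0*‖X - α‖)
              + M2 * ‖X - α‖ * (C1*(‖X - α‖*‖X - α‖))) := by ring
      rw [hexp]
      linarith [hYH, hTH]
end
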